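/- Let η_1, ..., η_K > 0 sum to 1 with Σ_{ℓ=1}^m η_ℓ ≠ 1/2 for all m. Let k* be the ordinal Bayes class (Σ_{ℓ<k*} η_ℓ < 1/2 < Σ_{ℓ≤k*} η_ℓ). Then k* minimizes over k ∈ {1,...,K} the aggregated binary 0-1 risk r(k) = Σ_{m=1}^{K-1} [𝟙(m ≥ k)·Σ_{ℓ>m} η_ℓ + 𝟙(m < k)·Σ_{ℓ≤m} η_ℓ]. -/

import Mathlib

/-- The ordinal Bayes class `k*` minimizes the aggregated binary 0-1 risk
`r(k) = ∑_{m=1}^{K-1} [𝟙(m ≥ k)·∑_{ℓ>m} η_ℓ + 𝟙(m < k)·∑_{ℓ≤m} η_ℓ]`.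
Here `η ℓ` (for `ℓ < K`) is the probability of class `ℓ + 1`, so
`∑_{ℓ≤m} η_ℓ = ∑_{ℓ ∈ range m} η ℓ` and `∑_{ℓ>m} η_ℓ = ∑_{ℓ ∈ Ico m K} η ℓ`. -/
theorem stmt_18 (K : ℕ) (η : ℕ → ℝ) (hpos : ∀ ℓ < K, 0 < η ℓ)
    (hsum : ∑ ℓ ∈ Finset.range K, η ℓ = 1)
    (hne : ∀ m, 1 ≤ m → m ≤ K - 1 → (∑ ℓ ∈ Finset.range m, η ℓ) ≠ 1 / 2)
    (kstar : ℕ) (hk1 : 1 ≤ kstar) (hk2 : kstar ≤ K)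
    (hlo : (∑ ℓ ∈ Finset.range (kstar - 1), η ℓ) < 1 / 2)
    (hhi : 1 / 2 < ∑ ℓ ∈ Finset.range kstar, η ℓ) :
    ∀ k, 1 ≤ k → k ≤ K →
      (∑ m ∈ Finset.Icc 1 (K - 1),
          (if kstar ≤ m then ∑ ℓ ∈ Finset.Ico m K, η ℓ
           else ∑ ℓ ∈ Finset.range m, η ℓ)) ≤
      ∑ m ∈ Finset.Icc 1 (K - 1),
          (if k ≤ m then ∑ ℓ ∈ Finset.Ico m K, η ℓ
           else ∑ ℓ ∈ Finset.range m, η ℓ) := by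
  intro k hk1' hk2'
  apply Finset.sum_le_sum
  intro m hm
  simp only [Finset.mem_Icc] at hm
  have hmK : m ≤ K := le_trans hm.2 (Nat.sub_le K 1)
  -- monotonicity of partial sums up to K
  have hmono : ∀ a b : ℕ, a ≤ b → b ≤ K →
      (∑ ℓ ∈ Finset.range a, η ℓ) ≤ ∑ ℓ ∈ Finset.range b, η ℓ := by
    intro a b hab hbK
    apply Finset.sum_le_sum_of_subset_of_nonneg (Finset.range_subset_range.mpr hab)
    intro i hi _
    exact (hpos i (lt_of_lt_of_le (Finset.mem_range.mp hi) hbK)).le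
  have hIco : (∑ ℓ ∈ Finset.Ico m K, η ℓ) = 1 - ∑ ℓ ∈ Finset.range m, η ℓ := by
    rw [Finset.sum_Ico_eq_sub _ hmK, hsum]
  by_cases h1 : kstar ≤ m
  · by_cases h2 : k ≤ m
    · rw [if_pos h1, if_pos h2]
    · -- kstar ≤ m, ¬ k ≤ m : need 1 - F(m) ≤ F(m)
      rw [if_pos h1, if_neg h2, hIco]
      have : 1 / 2 < ∑ ℓ ∈ Finset.range m, η ℓ :=
        lt_of_lt_of_le hhi (hmono kstar m h1 hmK)
      linarith
  · by_cases h2 : k ≤ m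
    · -- ¬ kstar ≤ m, k ≤ m : need F(m) ≤ 1 - F(m)
      rw [if_neg h1, if_pos h2, hIco]
      have hmk : m ≤ kstar - 1 := Nat.le_sub_one_of_lt (Nat.lt_of_not_le h1)
      have : (∑ ℓ ∈ Finset.range m, η ℓ) < 1 / 2 :=
        lt_of_le_of_lt (hmono m (kstar - 1) hmk (le_trans (Nat.sub_le kstar 1) hk2)) hlo
      linarith
    · rw [if_neg h1, if_neg h2]
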